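/- For every x ∈ (0,1), the derivative of the shifted weight satisfies (d/dx) W(x;a+1,b+2;d+2,c+2) = ((c+1)d(d+1))/((b+1)(d−a)) · ( W(x;a,b+1;c+1,d) − (cd/(ab))·x·W(x;a,b;c,d) ). -/

import Mathlib

open MeasureTheory

/-- Pochhammer symbol `(z)_n = z (z+1) ⋯ (z+n-1)`. -/
noncomputable def poch (z : ℝ) (n : ℕ) : ℝ := ∏ i ∈ Finset.range n, (z + i)

/-- Gauss hypergeometric series `₂F₁(α, β; γ; z)`. -/
noncomputable def twoF1 (α β γ z : ℝ) : ℝ :=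
  ∑' n : ℕ, (poch α n * poch β n) / (poch γ n * n.factorial) * z ^ n

noncomputable def cf (α β γ : ℝ) (n : ℕ) : ℝ :=
  poch α n * poch β n / (poch γ n * n.factorial)

lemma twoF1_eq (α β γ z : ℝ) : twoF1 α β γ z = ∑' n : ℕ, cf α β γ n * z ^ n := rfl

lemma poch_zero (z : ℝ) : poch z 0 = 1 := by simp [poch]

lemma poch_succ (z : ℝ) (n : ℕ) : poch z (n + 1) = poch z n * (z + n) := by
  simp [poch, Finset.prod_range_succ]

lemma poch_succ' (z : ℝ) (n : ℕ) : poch z (n + 1) = z * poch (z + 1) n := by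
  unfold poch
  rw [Finset.prod_range_succ']
  rw [mul_comm]
  congr 1
  · push_cast; ring
  · apply Finset.prod_congr rfl
    intro i _
    push_cast; ring

lemma poch_pos {z : ℝ} (hz : 0 < z) (n : ℕ) : 0 < poch z n := by
  unfold poch
  apply Finset.prod_pos
  intro i _
  positivity

lemma abs_poch_le (z : ℝ) (n : ℕ) : |poch z n| ≤ poch (|z| + 1) n := by
  unfold poch
  rw [Finset.abs_prod]
  apply Finset.prod_le_prod
  · intro i _; exact abs_nonneg _
  · intro i _
    have h1 : |z + (i : ℝ)| ≤ |z| + |(i : ℝ)| := abs_add_le _ _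
    rw [Nat.abs_cast] at h1
    linarith

lemma poch_shift {γ : ℝ} (hγ : γ ≠ 0) (n : ℕ) :
    poch (γ + 1) n = poch γ n * (γ + n) / γ := by
  have h := (poch_succ γ n).symm.trans (poch_succ' γ n)
  field_simp
  linarith [h]

open Filter in
lemma tendsto_ratio_aux (p q : ℝ) (hq : 0 < q) :
    Tendsto (fun n : ℕ => ((n : ℝ) + p) / ((n : ℝ) + q)) atTop (nhds 1) := by
  have h1 : Tendsto (fun n : ℕ => (n : ℝ) + q) atTop atTop :=
    tendsto_atTop_add_const_right _ q tendsto_natCast_atTop_atTop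
  have h2 : Tendsto (fun n : ℕ => (p - q) / ((n : ℝ) + q)) atTop (nhds 0) :=
    Filter.Tendsto.div_atTop tendsto_const_nhds h1
  have h3 : Tendsto (fun n : ℕ => 1 + (p - q) / ((n : ℝ) + q)) atTop (nhds (1 + 0)) :=
    tendsto_const_nhds.add h2
  rw [add_zero] at h3
  apply h3.congr
  intro n
  have hn : (n : ℝ) + q ≠ 0 := by positivity
  field_simp
  ring

open Filter in
lemma summable_main {A B γ r : ℝ} (hA : 0 < A) (hB : 0 < B) (hγ : 0 < γ)
    (hr0 : 0 < r) (hr1 : r < 1) :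
    Summable (fun n : ℕ =>
      poch A n * poch B n / (poch γ n * (n.factorial : ℝ)) * (((n : ℝ) + 1) * r ^ n)) := by
  set v : ℕ → ℝ := fun n =>
      poch A n * poch B n / (poch γ n * (n.factorial : ℝ)) * (((n : ℝ) + 1) * r ^ n) with hv
  have hvpos : ∀ n, 0 < v n := by
    intro n
    apply mul_pos
    · exact div_pos (mul_pos (poch_pos hA n) (poch_pos hB n))
        (mul_pos (poch_pos hγ n) (by positivity))
    · positivity
  apply summable_of_ratio_test_tendsto_lt_one hr1
  · exact Filter.Eventually.of_forall (fun n => (hvpos n).ne')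
  · have hrat : ∀ n : ℕ, (((n : ℝ) + A) / ((n : ℝ) + 1)) * (((n : ℝ) + B) / ((n : ℝ) + γ))
        * ((((n : ℝ) + 2)) / (((n : ℝ) + 1))) * r = ‖v (n + 1)‖ / ‖v n‖ := by
      intro n
      rw [Real.norm_eq_abs, Real.norm_eq_abs, abs_of_pos (hvpos _), abs_of_pos (hvpos _), hv]
      simp only
      rw [poch_succ A, poch_succ B, poch_succ γ, Nat.factorial_succ, pow_succ]
      have h1 : poch A n ≠ 0 := (poch_pos hA n).ne'
      have h2 : poch B n ≠ 0 := (poch_pos hB n).ne'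
      have h3 : poch γ n ≠ 0 := (poch_pos hγ n).ne'
      have h4 : ((n.factorial : ℝ)) ≠ 0 := by positivity
      have h5 : (n : ℝ) + 1 ≠ 0 := by positivity
      have h6 : (n : ℝ) + γ ≠ 0 := by positivity
      have h7 : (n : ℝ) + A ≠ 0 := by positivity
      have h8 : (n : ℝ) + B ≠ 0 := by positivity
      have h9 : r ≠ 0 := hr0.ne'
      have h10 : r ^ n ≠ 0 := by positivity
      have h11 : (n : ℝ) + 2 ≠ 0 := by positivity
      push_cast
      field_simp
      ring
    have ht : Tendsto (fun n : ℕ => (((n : ℝ) + A) / ((n : ℝ) + 1))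
        * (((n : ℝ) + B) / ((n : ℝ) + γ)) * ((((n : ℝ) + 2)) / (((n : ℝ) + 1))) * r)
        atTop (nhds (1 * 1 * 1 * r)) :=
      (((tendsto_ratio_aux A 1 one_pos).mul (tendsto_ratio_aux B γ hγ)).mul
        (tendsto_ratio_aux 2 1 one_pos)).mul tendsto_const_nhds
    rw [show (1 : ℝ) * 1 * 1 * r = r by ring] at ht
    exact ht.congr hrat

lemma cf_bound {α β γ : ℝ} (hγ : 0 < γ) (n : ℕ) :
    |cf α β γ n| ≤ poch (|α| + 1) n * poch (|β| + 1) n / (poch γ n * (n.factorial : ℝ)) := by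
  unfold cf
  have hden : 0 < poch γ n * (n.factorial : ℝ) :=
    mul_pos (poch_pos hγ n) (by positivity)
  rw [abs_div, abs_mul, abs_of_pos hden]
  have hnum : |poch α n| * |poch β n| ≤ poch (|α| + 1) n * poch (|β| + 1) n :=
    mul_le_mul (abs_poch_le α n) (abs_poch_le β n) (abs_nonneg _)
      ((abs_nonneg _).trans (abs_poch_le α n))
  gcongr


lemma aux_pow_le {r : ℝ} (hr0 : 0 < r) (n : ℕ) :
    (n : ℝ) * r ^ (n - 1) ≤ ((n : ℝ) + 1) * r ^ n / r := by
  have hr : r ≠ 0 := hr0.ne'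
  cases n with
  | zero => simp; positivity
  | succ m =>
    rw [Nat.add_sub_cancel]
    have h2 : ((m + 1 : ℕ) + 1 : ℝ) * r ^ (m + 1) / r = ((m + 1 : ℕ) + 1 : ℝ) * r ^ m := by
      field_simp [pow_succ]
      ring
    rw [h2]
    have h3 : (0:ℝ) ≤ r ^ m := by positivity
    push_cast
    nlinarith

lemma cf_deriv_bound {α β γ r : ℝ} (hγ : 0 < γ) (hr0 : 0 < r) {y : ℝ} (hy : |y| ≤ r) (n : ℕ) :
    ‖cf α β γ n * ((n : ℝ) * y ^ (n - 1))‖ ≤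
      poch (|α| + 1) n * poch (|β| + 1) n / (poch γ n * (n.factorial : ℝ))
        * (((n : ℝ) + 1) * r ^ n) / r := by
  have hden : 0 < poch γ n * (n.factorial : ℝ) := mul_pos (poch_pos hγ n) (by positivity)
  have hQ : (0:ℝ) ≤ poch (|α| + 1) n * poch (|β| + 1) n / (poch γ n * (n.factorial : ℝ)) := by
    have h1 := poch_pos (show (0:ℝ) < |α| + 1 by positivity) n
    have h2 := poch_pos (show (0:ℝ) < |β| + 1 by positivity) n
    positivity
  have h2' : (n : ℝ) * |y| ^ (n - 1) ≤ ((n : ℝ) + 1) * r ^ n / r := by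
    refine le_trans ?_ (aux_pow_le hr0 n)
    have h0 : (0:ℝ) ≤ |y| := abs_nonneg y
    gcongr
  rw [Real.norm_eq_abs, abs_mul, abs_mul, abs_pow, Nat.abs_cast, mul_div_assoc]
  exact mul_le_mul (cf_bound hγ n) h2' (by positivity) hQ

lemma summable_cf {α β γ : ℝ} (hγ : 0 < γ) {z : ℝ} (hz : |z| < 1) :
    Summable (fun n : ℕ => cf α β γ n * z ^ n) := by
  set r : ℝ := (|z| + 1) / 2 with hr
  have habs : 0 ≤ |z| := abs_nonneg z
  have hr0 : 0 < r := by rw [hr]; positivity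
  have hr1 : r < 1 := by rw [hr]; linarith
  have hzr : |z| ≤ r := by rw [hr]; linarith
  have hA : (0:ℝ) < |α| + 1 := by positivity
  have hB : (0:ℝ) < |β| + 1 := by positivity
  apply Summable.of_norm_bounded (summable_main hA hB hγ hr0 hr1)
  intro n
  have hden : 0 < poch γ n * (n.factorial : ℝ) := mul_pos (poch_pos hγ n) (by positivity)
  have hQ : (0:ℝ) ≤ poch (|α| + 1) n * poch (|β| + 1) n / (poch γ n * (n.factorial : ℝ)) := by
    have h1 := poch_pos hA n
    have h2 := poch_pos hB n
    positivity
  rw [Real.norm_eq_abs, abs_mul, abs_pow]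
  calc |cf α β γ n| * |z| ^ n
      ≤ poch (|α| + 1) n * poch (|β| + 1) n / (poch γ n * (n.factorial : ℝ)) * (1 * r ^ n) :=
        by rw [one_mul]
           exact mul_le_mul (cf_bound hγ n) (pow_le_pow_left₀ habs hzr n) (by positivity) hQ
    _ ≤ poch (|α| + 1) n * poch (|β| + 1) n / (poch γ n * (n.factorial : ℝ))
          * (((n : ℝ) + 1) * r ^ n) := by
        gcongr
        · have : (0:ℝ) ≤ (n:ℝ) := Nat.cast_nonneg n
          linarith

lemma summable_cf_deriv {α β γ : ℝ} (hγ : 0 < γ) {z : ℝ} (hz : |z| < 1) :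
    Summable (fun n : ℕ => cf α β γ n * ((n : ℝ) * z ^ (n - 1))) := by
  set r : ℝ := (|z| + 1) / 2 with hr
  have habs : 0 ≤ |z| := abs_nonneg z
  have hr0 : 0 < r := by rw [hr]; positivity
  have hr1 : r < 1 := by rw [hr]; linarith
  have hzr : |z| ≤ r := by rw [hr]; linarith
  have hA : (0:ℝ) < |α| + 1 := by positivity
  have hB : (0:ℝ) < |β| + 1 := by positivity
  apply Summable.of_norm_bounded ((summable_main hA hB hγ hr0 hr1).div_const r)
  intro n
  exact cf_deriv_bound hγ hr0 hzr n

lemma summable_cf_deriv' {α β γ : ℝ} (hγ : 0 < γ) {z : ℝ} (hz : |z| < 1) :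
    Summable (fun n : ℕ => cf α β γ (n + 1) * ((n : ℝ) + 1) * z ^ n) := by
  have h := (summable_nat_add_iff 1).mpr (summable_cf_deriv (α := α) (β := β) hγ hz)
  apply h.congr
  intro n
  simp only [Nat.add_sub_cancel]
  push_cast
  ring

lemma hasDerivAt_twoF1 (α β γ : ℝ) (hγ : 0 < γ) {z : ℝ} (hz : |z| < 1) :
    HasDerivAt (twoF1 α β γ)
      (∑' n : ℕ, cf α β γ (n + 1) * ((n : ℝ) + 1) * z ^ n) z := by
  set r : ℝ := (|z| + 1) / 2 with hr
  have habs : 0 ≤ |z| := abs_nonneg z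
  have hr0 : 0 < r := by rw [hr]; positivity
  have hr1 : r < 1 := by rw [hr]; linarith
  have hzr : |z| < r := by rw [hr]; linarith
  have hA : (0:ℝ) < |α| + 1 := by positivity
  have hB : (0:ℝ) < |β| + 1 := by positivity
  have hmem : z ∈ Metric.ball (0:ℝ) r := by
    simpa [Real.dist_eq] using hzr
  have key : HasDerivAt (fun y : ℝ => ∑' n : ℕ, cf α β γ n * y ^ n)
      (∑' n : ℕ, cf α β γ n * ((n : ℝ) * z ^ (n - 1))) z := by
    apply hasDerivAt_tsum_of_isPreconnected
      ((summable_main hA hB hγ hr0 hr1).div_const r)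
      Metric.isOpen_ball (convex_ball (0:ℝ) r).isPreconnected
      (g := fun (n : ℕ) (y : ℝ) => cf α β γ n * y ^ n)
      (g' := fun (n : ℕ) (y : ℝ) => cf α β γ n * ((n : ℝ) * y ^ (n - 1)))
      ?_ ?_ hmem (summable_cf hγ hz) hmem
    · intro n y _
      exact (hasDerivAt_pow n y).const_mul (cf α β γ n)
    · intro n y hy
      have hy' : |y| ≤ r := by
        have := hy
        rw [Metric.mem_ball, Real.dist_eq, sub_zero] at this
        exact this.le
      exact cf_deriv_bound hγ hr0 hy' n
  have shift : (∑' n : ℕ, cf α β γ n * ((n : ℝ) * z ^ (n - 1)))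
      = ∑' n : ℕ, cf α β γ (n + 1) * ((n : ℝ) + 1) * z ^ n := by
    rw [Summable.tsum_eq_zero_add (summable_cf_deriv hγ hz)]
    have h0 : cf α β γ 0 * ((0 : ℕ) * z ^ ((0:ℕ) - 1)) = 0 := by norm_num
    rw [show cf α β γ 0 * (((0:ℕ) : ℝ) * z ^ ((0:ℕ) - 1)) = 0 by norm_num, zero_add]
    apply tsum_congr
    intro n
    simp only [Nat.add_sub_cancel]
    push_cast
    ring
  rw [← shift]
  exact key

lemma twoF1_comm (α β γ z : ℝ) : twoF1 α β γ z = twoF1 β α γ z := by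
  unfold twoF1
  apply tsum_congr
  intro n
  ring

lemma cf_rel (α β γ : ℝ) (hγ : 0 < γ) (n : ℕ) :
    (γ + (n : ℝ)) * cf α β (γ + 1) n = γ * cf α β γ n := by
  have h1 : poch γ n ≠ 0 := (poch_pos hγ n).ne'
  have h2 : (0:ℝ) < γ + n := by positivity
  have h3 : ((n.factorial : ℝ)) ≠ 0 := by positivity
  unfold cf
  rw [poch_shift hγ.ne' n]
  field_simp

lemma cfB (α β γ : ℝ) (hγ : 0 < γ) (n : ℕ) :
    cf β (α - 1) γ (n + 1) - cf β α γ (n + 1) + cf β α γ n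
      = ((γ - β) / γ) * cf α β (γ + 1) n := by
  have h1 : poch γ n ≠ 0 := (poch_pos hγ n).ne'
  have h2 : (0:ℝ) < γ + n := by positivity
  have h3 : ((n.factorial : ℝ)) ≠ 0 := by positivity
  have h4 : ((n:ℝ) + 1) ≠ 0 := by positivity
  unfold cf
  rw [poch_succ β n, poch_succ' (α - 1) n, show α - 1 + 1 = α from by ring,
    poch_succ α n, poch_succ γ n, Nat.factorial_succ, poch_shift hγ.ne' n]
  push_cast
  field_simp
  ring

lemma contiguous1 (α β γ : ℝ) (hγ : 0 < γ) {t : ℝ} (ht : |t| < 1) (ht0 : t ≠ 0) :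
    (∑' n : ℕ, cf α β (γ + 1) (n + 1) * ((n : ℝ) + 1) * t ^ n)
      = (γ * twoF1 α β γ t - γ * twoF1 α β (γ + 1) t) / t := by
  have hγ1 : (0:ℝ) < γ + 1 := by linarith
  have hs3 : Summable (fun n : ℕ => cf α β γ n * t ^ n) := summable_cf hγ ht
  have hs1 : Summable (fun n : ℕ => cf α β (γ + 1) n * t ^ n) := summable_cf hγ1 ht
  rw [eq_div_iff ht0, twoF1_eq, twoF1_eq]
  have l : (∑' n : ℕ, cf α β (γ + 1) (n + 1) * ((n : ℝ) + 1) * t ^ n) * t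
      = ∑' n : ℕ, cf α β (γ + 1) (n + 1) * ((n : ℝ) + 1) * t ^ (n + 1) := by
    rw [← tsum_mul_right]
    exact tsum_congr (fun n => by ring)
  have r : γ * (∑' n : ℕ, cf α β γ n * t ^ n) - γ * (∑' n : ℕ, cf α β (γ + 1) n * t ^ n)
      = ∑' n : ℕ, (γ * (cf α β γ (n + 1) * t ^ (n + 1))
          - γ * (cf α β (γ + 1) (n + 1) * t ^ (n + 1))) := by
    rw [← tsum_mul_left, ← tsum_mul_left,
      ← Summable.tsum_sub (hs3.mul_left γ) (hs1.mul_left γ),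
      Summable.tsum_eq_zero_add ((hs3.mul_left γ).sub (hs1.mul_left γ))]
    have h0 : γ * (cf α β γ 0 * t ^ 0) - γ * (cf α β (γ + 1) 0 * t ^ 0) = 0 := by
      simp [cf, poch_zero]
    rw [h0, zero_add]
  rw [l, r]
  apply tsum_congr
  intro n
  have key := cf_rel α β γ hγ (n + 1)
  push_cast at key
  linear_combination (t ^ (n + 1)) * key

lemma contiguous2 (α β γ : ℝ) (hγ : 0 < γ) {t : ℝ} (ht : |t| < 1) :
    twoF1 β (α - 1) γ t
      = (1 - t) * twoF1 β α γ t + ((γ - β) / γ) * (t * twoF1 α β (γ + 1) t) := by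
  have hγ1 : (0:ℝ) < γ + 1 := by linarith
  have hs2 : Summable (fun n : ℕ => cf β (α - 1) γ n * t ^ n) := summable_cf hγ ht
  have hs3 : Summable (fun n : ℕ => cf β α γ n * t ^ n) := summable_cf hγ ht
  have hs1 : Summable (fun n : ℕ => cf α β (γ + 1) n * t ^ n) := summable_cf hγ1 ht
  rw [twoF1_eq, twoF1_eq, twoF1_eq]
  have main : (∑' n : ℕ, cf β (α - 1) γ n * t ^ n) - (∑' n : ℕ, cf β α γ n * t ^ n)
      = ∑' n : ℕ, (cf β (α - 1) γ (n + 1) * t ^ (n + 1) - cf β α γ (n + 1) * t ^ (n + 1)) := by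
    rw [← Summable.tsum_sub hs2 hs3, Summable.tsum_eq_zero_add (hs2.sub hs3)]
    have h0 : cf β (α - 1) γ 0 * t ^ 0 - cf β α γ 0 * t ^ 0 = 0 := by
      simp [cf, poch_zero]
    rw [h0, zero_add]
  have rhs : ((γ - β) / γ) * (t * (∑' n : ℕ, cf α β (γ + 1) n * t ^ n))
        - t * (∑' n : ℕ, cf β α γ n * t ^ n)
      = ∑' n : ℕ, (((γ - β) / γ) * (t * (cf α β (γ + 1) n * t ^ n))
          - t * (cf β α γ n * t ^ n)) := by
    rw [← tsum_mul_left, ← tsum_mul_left, ← tsum_mul_left,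
      ← Summable.tsum_sub (((hs1.mul_left t)).mul_left ((γ - β) / γ)) (hs3.mul_left t)]
  have final : (∑' n : ℕ, cf β (α - 1) γ n * t ^ n) - (∑' n : ℕ, cf β α γ n * t ^ n)
      = ((γ - β) / γ) * (t * (∑' n : ℕ, cf α β (γ + 1) n * t ^ n))
        - t * (∑' n : ℕ, cf β α γ n * t ^ n) := by
    rw [main, rhs]
    apply tsum_congr
    intro n
    have key := cfB α β γ hγ n
    linear_combination (t ^ (n + 1)) * key
  linear_combination final

/-- The weight function `W(x; a, b; c, d)`. -/
noncomputable def W (a b c d : ℝ) (x : ℝ) : ℝ :=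
  (Real.Gamma c * Real.Gamma d) /
      (Real.Gamma a * Real.Gamma b * Real.Gamma (c + d - a - b)) *
    (x ^ (a - 1) * (1 - x) ^ (c + d - a - b - 1) *
      twoF1 (c - b) (d - b) (c + d - a - b) (1 - x))

/-- Derivative of the shifted weight `W(x;a+1,b+2;d+2,c+2)`:
`(d/dx) W(x;a+1,b+2;d+2,c+2)
  = ((c+1)d(d+1))/((b+1)(d−a)) · (W(x;a,b+1;c+1,d) − (cd/(ab))·x·W(x;a,b;c,d))`. -/
theorem deriv_shifted_weight_second (a b c d : ℝ)
    (ha : 0 < a) (hb : 0 < b) (hc : 0 < c) (hd : 0 < d)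
    (hcd : max a b < min c d) :
    ∀ x ∈ Set.Ioo (0 : ℝ) 1,
      deriv (W (a + 1) (b + 2) (d + 2) (c + 2)) x =
        (((c + 1) * d * (d + 1)) / ((b + 1) * (d - a))) *
          (W a (b + 1) (c + 1) d x - (c * d / (a * b)) * x * W a b c d x) := by
  intro x hx
  obtain ⟨hx0, hx1⟩ := hx
  have ht0 : (0:ℝ) < 1 - x := by linarith
  have ht1 : |1 - x| < 1 := by rw [abs_of_pos ht0]; linarith
  have had : a < d := (le_max_left a b).trans_lt (hcd.trans_le (min_le_right c d))
  have hbc : b < c := (le_max_right a b).trans_lt (hcd.trans_le (min_le_left c d))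
  have hδ : (0:ℝ) < c + d - a - b := by linarith
  have hδ1 : (0:ℝ) < c + d - a - b + 1 := by linarith
  have hGa := Real.Gamma_pos_of_pos ha
  have hGb := Real.Gamma_pos_of_pos hb
  have hGc := Real.Gamma_pos_of_pos hc
  have hGd := Real.Gamma_pos_of_pos hd
  have hGδ := Real.Gamma_pos_of_pos hδ
  -- the shifted weight as an explicit function
  have hW : W (a + 1) (b + 2) (d + 2) (c + 2) = fun y : ℝ =>
      Real.Gamma (d + 2) * Real.Gamma (c + 2) /
          (Real.Gamma (a + 1) * Real.Gamma (b + 2) * Real.Gamma (c + d - a - b + 1)) *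
        (y ^ a * (1 - y) ^ (c + d - a - b) *
          twoF1 (d - b) (c - b) (c + d - a - b + 1) (1 - y)) := by
    funext y
    show Real.Gamma (d + 2) * Real.Gamma (c + 2) /
          (Real.Gamma (a + 1) * Real.Gamma (b + 2)
            * Real.Gamma (d + 2 + (c + 2) - (a + 1) - (b + 2))) *
        (y ^ (a + 1 - 1) * (1 - y) ^ (d + 2 + (c + 2) - (a + 1) - (b + 2) - 1) *
          twoF1 (d + 2 - (b + 2)) (c + 2 - (b + 2)) (d + 2 + (c + 2) - (a + 1) - (b + 2))
            (1 - y)) = _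
    rw [show d + 2 + (c + 2) - (a + 1) - (b + 2) = c + d - a - b + 1 from by ring,
      show d + 2 - (b + 2) = d - b from by ring,
      show c + 2 - (b + 2) = c - b from by ring,
      show a + 1 - 1 = a from by ring,
      show c + d - a - b + 1 - 1 = c + d - a - b from by ring]
  rw [hW]
  -- derivative pieces
  have hd1 : HasDerivAt (fun y : ℝ => y ^ a) (a * x ^ (a - 1)) x :=
    Real.hasDerivAt_rpow_const (Or.inl hx0.ne')
  have hneg : HasDerivAt (fun y : ℝ => 1 - y) (-1) x := (hasDerivAt_id x).const_sub 1
  have hd2 : HasDerivAt (fun y : ℝ => (1 - y) ^ (c + d - a - b))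
      (-1 * (c + d - a - b) * (1 - x) ^ (c + d - a - b - 1)) x :=
    hneg.rpow_const (Or.inl ht0.ne')
  have hF : HasDerivAt (twoF1 (d - b) (c - b) (c + d - a - b + 1))
      (∑' n : ℕ, cf (d - b) (c - b) (c + d - a - b + 1) (n + 1) * ((n : ℝ) + 1)
        * (1 - x) ^ n) (1 - x) :=
    hasDerivAt_twoF1 _ _ _ hδ1 ht1
  have hd3 : HasDerivAt (fun y : ℝ => twoF1 (d - b) (c - b) (c + d - a - b + 1) (1 - y))
      ((∑' n : ℕ, cf (d - b) (c - b) (c + d - a - b + 1) (n + 1) * ((n : ℝ) + 1)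
        * (1 - x) ^ n) * (-1)) x := hF.comp x hneg
  have hbig : HasDerivAt (fun y : ℝ =>
      Real.Gamma (d + 2) * Real.Gamma (c + 2) /
          (Real.Gamma (a + 1) * Real.Gamma (b + 2) * Real.Gamma (c + d - a - b + 1)) *
        (y ^ a * (1 - y) ^ (c + d - a - b) *
          twoF1 (d - b) (c - b) (c + d - a - b + 1) (1 - y)))
      (Real.Gamma (d + 2) * Real.Gamma (c + 2) /
          (Real.Gamma (a + 1) * Real.Gamma (b + 2) * Real.Gamma (c + d - a - b + 1)) *
        ((a * x ^ (a - 1) * (1 - x) ^ (c + d - a - b)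
            - x ^ a * (c + d - a - b) * (1 - x) ^ (c + d - a - b - 1))
            * twoF1 (d - b) (c - b) (c + d - a - b + 1) (1 - x)
          - x ^ a * (1 - x) ^ (c + d - a - b)
            * (∑' n : ℕ, cf (d - b) (c - b) (c + d - a - b + 1) (n + 1) * ((n : ℝ) + 1)
                * (1 - x) ^ n))) x := by
    have H := ((hd1.mul hd2).mul hd3).const_mul
      (Real.Gamma (d + 2) * Real.Gamma (c + 2) /
        (Real.Gamma (a + 1) * Real.Gamma (b + 2) * Real.Gamma (c + d - a - b + 1)))
    exact H.congr_deriv (by simp only [Pi.mul_apply]; ring)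
  rw [hbig.deriv]
  -- rewrite the derivative tsum via the first contiguous relation
  have hDval : (∑' n : ℕ, cf (d - b) (c - b) (c + d - a - b + 1) (n + 1) * ((n : ℝ) + 1)
        * (1 - x) ^ n)
      = ((c + d - a - b) * twoF1 (d - b) (c - b) (c + d - a - b) (1 - x)
          - (c + d - a - b) * twoF1 (d - b) (c - b) (c + d - a - b + 1) (1 - x)) / (1 - x) :=
    contiguous1 (d - b) (c - b) (c + d - a - b) hδ ht1 ht0.ne'
  rw [hDval]
  -- unfold the right-hand side weights
  show _ = ((c + 1) * d * (d + 1)) / ((b + 1) * (d - a)) *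
      (Real.Gamma (c + 1) * Real.Gamma d /
          (Real.Gamma a * Real.Gamma (b + 1) * Real.Gamma (c + 1 + d - a - (b + 1))) *
        (x ^ (a - 1) * (1 - x) ^ (c + 1 + d - a - (b + 1) - 1) *
          twoF1 (c + 1 - (b + 1)) (d - (b + 1)) (c + 1 + d - a - (b + 1)) (1 - x))
        - c * d / (a * b) * x *
          (Real.Gamma c * Real.Gamma d /
              (Real.Gamma a * Real.Gamma b * Real.Gamma (c + d - a - b)) *
            (x ^ (a - 1) * (1 - x) ^ (c + d - a - b - 1) *
              twoF1 (c - b) (d - b) (c + d - a - b) (1 - x))))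
  rw [show c + 1 + d - a - (b + 1) = c + d - a - b from by ring,
    show c + 1 - (b + 1) = c - b from by ring,
    show d - (b + 1) = d - b - 1 from by ring]
  -- second contiguous relation
  have hF2 : twoF1 (c - b) (d - b - 1) (c + d - a - b) (1 - x)
      = (1 - (1 - x)) * twoF1 (c - b) (d - b) (c + d - a - b) (1 - x)
        + ((c + d - a - b - (c - b)) / (c + d - a - b))
          * ((1 - x) * twoF1 (d - b) (c - b) (c + d - a - b + 1) (1 - x)) :=
    contiguous2 (d - b) (c - b) (c + d - a - b) hδ ht1
  rw [hF2]
  rw [twoF1_comm (d - b) (c - b) (c + d - a - b) (1 - x)]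
  -- expand Gamma values
  rw [show b + 2 = b + 1 + 1 from by ring, show c + 2 = c + 1 + 1 from by ring,
    show d + 2 = d + 1 + 1 from by ring,
    Real.Gamma_add_one (show b + 1 ≠ 0 from by positivity),
    Real.Gamma_add_one (show c + 1 ≠ 0 from by positivity),
    Real.Gamma_add_one (show d + 1 ≠ 0 from by positivity),
    Real.Gamma_add_one ha.ne', Real.Gamma_add_one hb.ne', Real.Gamma_add_one hc.ne',
    Real.Gamma_add_one hd.ne', Real.Gamma_add_one hδ.ne']
  -- split the rpow factors
  have hxa : x ^ a = x ^ (a - 1) * x := by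
    have h := Real.rpow_add_one hx0.ne' (a - 1)
    rw [show a - 1 + 1 = a from by ring] at h
    exact h
  have hta : (1 - x) ^ (c + d - a - b) = (1 - x) ^ (c + d - a - b - 1) * (1 - x) := by
    have h := Real.rpow_add_one ht0.ne' (c + d - a - b - 1)
    rw [show c + d - a - b - 1 + 1 = c + d - a - b from by ring] at h
    exact h
  rw [hxa, hta]
  have h1 : Real.Gamma a ≠ 0 := hGa.ne'
  have h2 : Real.Gamma b ≠ 0 := hGb.ne'
  have h3 : Real.Gamma c ≠ 0 := hGc.ne'
  have h4 : Real.Gamma d ≠ 0 := hGd.ne'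
  have h5 : Real.Gamma (c + d - a - b) ≠ 0 := hGδ.ne'
  have h6 : a ≠ 0 := ha.ne'
  have h7 : b ≠ 0 := hb.ne'
  have h8 : c + d - a - b ≠ 0 := hδ.ne'
  have h9 : d - a ≠ 0 := by linarith
  have h10 : b + 1 ≠ 0 := by positivity
  have h11 : (1 - x) ≠ 0 := ht0.ne'
  field_simp
  ring
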